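/- A region F is unbounded if and only if δ'(F) contains a simple root. -/

import Mathlib

open scoped RealInnerProductSpace

/-- A finite reduced crystallographic root system spanning a real inner
product space `V` (whose inner product is automatically invariant under the
Weyl group, since the reflections are isometries), together with a fixed
system of positive roots and the corresponding simple roots. -/
structure RootSystemData (V : Type)
    [NormedAddCommGroup V] [InnerProductSpace ℝ V] : Type where
  roots : Finset V
  pos : Finset V
  simples : Finset V
  zero_not_mem : (0 : V) ∉ roots
  span_roots : Submodule.span ℝ (roots : Set V) = ⊤
  crystallographic : ∀ α ∈ roots, ∀ β ∈ roots,
    ∃ n : ℤ, 2 * ⟪α, β⟫ = (n : ℝ) * ⟪β, β⟫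
  reduced : ∀ α ∈ roots, ∀ t : ℝ, t • α ∈ roots → t = 1 ∨ t = -1
  reflect_mem : ∀ α ∈ roots, ∀ β ∈ roots,
    β - (2 * ⟪β, α⟫ / ⟪α, α⟫) • α ∈ roots
  pos_subset : pos ⊆ roots
  mem_pos_or_neg_mem_pos : ∀ α ∈ roots, α ∈ pos ∨ -α ∈ pos
  neg_not_pos : ∀ α ∈ pos, -α ∉ pos
  simples_subset : simples ⊆ pos
  simples_linearIndependent : LinearIndependent ℝ (fun α : simples => (α : V))
  pos_sum_of_simples : ∀ β ∈ pos, ∃ c : V →₀ ℕ,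
    (c.support : Set V) ⊆ (simples : Set V) ∧ β = c.sum fun α n => (n : ℝ) • α

namespace RootSystemData

variable {V : Type} [NormedAddCommGroup V] [InnerProductSpace ℝ V]
variable (R : RootSystemData V)

/-- `β₁ > β₂` : the difference `β₁ - β₂` is a nonempty sum of positive roots. -/
def Gt (x y : V) : Prop :=
  ∃ m : Multiset V, m ≠ 0 ∧ (∀ z ∈ m, z ∈ R.pos) ∧ x - y = m.sum

/-- `β₁ ≥ β₂` : either `β₁ > β₂` or `β₁ = β₂`. -/
def Ge (x y : V) : Prop := R.Gt x y ∨ x = y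

/-- An antichain: a set of pairwise incomparable positive roots. -/
def IsRootAntichain (A : Set V) : Prop :=
  A ⊆ (R.pos : Set V) ∧ ∀ x ∈ A, ∀ y ∈ A, x ≠ y → ¬ R.Ge x y ∧ ¬ R.Ge y x

/-- An orthogonal antichain: an antichain of pairwise orthogonal positive roots. -/
def IsOrthAntichain (A : Set V) : Prop :=
  R.IsRootAntichain A ∧ ∀ x ∈ A, ∀ y ∈ A, x ≠ y → ⟪x, y⟫ = 0

/-- The complement, inside the open dominant Weyl chamber, of the hyperplane
arrangement `⟨β,·⟩ = 1`, `β ∈ Δ⁺`. -/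
def chamberSet : Set V :=
  {χ | (∀ α ∈ R.simples, 0 < ⟪α, χ⟫) ∧ ∀ β ∈ R.pos, ⟪β, χ⟫ ≠ 1}

/-- A region: a connected component of `chamberSet`. -/
def IsRegion (F : Set V) : Prop :=
  ∃ χ ∈ R.chamberSet, F = connectedComponentIn R.chamberSet χ

/-- The positive roots `β` with `⟨β,·⟩ < 1` on `F`. -/
def ltOne (F : Set V) : Set V := {β | β ∈ R.pos ∧ ∀ χ ∈ F, ⟪β, χ⟫ < 1}

/-- The positive roots `β` with `⟨β,·⟩ > 1` on `F`. -/
def gtOne (F : Set V) : Set V := {β | β ∈ R.pos ∧ ∀ χ ∈ F, 1 < ⟪β, χ⟫}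

/-- `δ(F)`: the maximal roots among the positive roots `β` with `⟨β,·⟩ < 1` on `F`. -/
def deltaLow (F : Set V) : Set V :=
  {β | β ∈ R.ltOne F ∧ ∀ β' ∈ R.ltOne F, ¬ R.Gt β' β}

/-- `δ'(F)`: the minimal roots among the positive roots `β` with `⟨β,·⟩ > 1` on `F`. -/
def deltaHigh (F : Set V) : Set V :=
  {β | β ∈ R.gtOne F ∧ ∀ β' ∈ R.gtOne F, ¬ R.Gt β β'}

/-- Simply laced: all roots have the same length, normalized so `⟨β,β⟩ = 2`. -/
def SimplyLaced : Prop := ∀ β ∈ R.roots, ⟪β, β⟫ = 2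

/-- Irreducibility: the set of roots admits no nontrivial partition into two
mutually orthogonal parts. -/
def IsIrreducible : Prop :=
  ∀ S : Set V, S ⊆ (R.roots : Set V) →
    (∀ a ∈ S, ∀ b ∈ (R.roots : Set V) \ S, ⟪a, b⟫ = 0) →
    S = ∅ ∨ S = (R.roots : Set V)

/-- The height of a positive root: the sum of its (unique) coordinates in the
simple roots. -/
noncomputable def height (β : V) : ℕ :=
  letI := Classical.propDecidable (∃ c : V →₀ ℕ, (c.support : Set V) ⊆ (R.simples : Set V) ∧
      β = c.sum (fun α n => (n : ℝ) • α))
  if h : ∃ c : V →₀ ℕ, (c.support : Set V) ⊆ (R.simples : Set V) ∧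
      β = c.sum (fun α n => (n : ℝ) • α)
  then (Classical.choose h).sum fun _ n => n
  else 0

/-- The root system has the Cartan–Killing type given by the (simply laced)
Cartan matrix `A`: there is an indexing of the simple roots under which, in the
normalization `⟨β,β⟩ = 2`, the inner products of simple roots are the entries
of `A`. -/
def HasType {n : ℕ} (A : Matrix (Fin n) (Fin n) ℤ) : Prop :=
  ∃ e : Fin n ≃ {x // x ∈ R.simples},
    ∀ i j, ⟪((e i : V)), ((e j : V))⟫ = (A i j : ℝ)

/-- The reflections `s_β`, `β ∈ S`, as linear isometries of `V`. -/
def reflectionsOn (S : Set V) : Set (V ≃ₗᵢ[ℝ] V) :=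
  {g | ∃ β ∈ S, ∀ v, g v = v - (2 * ⟪v, β⟫ / ⟪β, β⟫) • β}

/-- The Weyl group `W`, generated by the reflections in all roots. -/
def weyl : Subgroup (V ≃ₗᵢ[ℝ] V) :=
  Subgroup.closure (reflectionsOn (R.roots : Set V))

/-- The reflection subgroup generated by the reflections `s_β`, `β ∈ S`. -/
def weylOf (S : Set V) : Subgroup (V ≃ₗᵢ[ℝ] V) :=
  Subgroup.closure (reflectionsOn S)

/-- `Δ_S = Δ ∩ span_ℝ(S)`. -/
def rootsIn (S : Set V) : Set V :=
  {β | β ∈ R.roots ∧ β ∈ Submodule.span ℝ S}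

/-- `Δ_S⁺ = Δ⁺ ∩ span_ℝ(S)`. -/
def posIn (S : Set V) : Set V :=
  {β | β ∈ R.pos ∧ β ∈ Submodule.span ℝ S}

/-- The inversion set `N(w) = {β ∈ Δ⁺ : w(β) ∈ -Δ⁺}`. -/
def inversionSet (w : V ≃ₗᵢ[ℝ] V) : Set V :=
  {β | β ∈ R.pos ∧ -(w β) ∈ R.pos}

end RootSystemData

section Aux

variable {V : Type} [NormedAddCommGroup V] [InnerProductSpace ℝ V]

lemma aux_pos_ne_zero (R : RootSystemData V) {β : V} (hβ : β ∈ R.pos) : β ≠ 0 :=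
  fun h => R.zero_not_mem (h ▸ R.pos_subset hβ)

lemma aux_span (R : RootSystemData V) :
    Submodule.span ℝ ((R.simples : Set V)) = ⊤ := by
  have hpos : ∀ β ∈ R.pos, β ∈ Submodule.span ℝ ((R.simples : Set V)) := by
    intro β hβ
    obtain ⟨c, hsupp, hsum⟩ := R.pos_sum_of_simples β hβ
    rw [hsum, Finsupp.sum]
    exact Submodule.sum_mem _ fun α hα =>
      Submodule.smul_mem _ _ (Submodule.subset_span (hsupp hα))
  rw [eq_top_iff, ← R.span_roots, Submodule.span_le]
  intro α hα
  rcases R.mem_pos_or_neg_mem_pos α hα with h | h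
  · exact hpos α h
  · simpa using Submodule.neg_mem _ (hpos _ h)

noncomputable def simplesBasis (R : RootSystemData V) : Module.Basis {x // x ∈ R.simples} ℝ V :=
  Module.Basis.mk R.simples_linearIndependent
    (by rw [Subtype.range_coe_subtype]
        simp only [Finset.setOf_mem]
        exact (aux_span R).ge)

lemma f_simple (R : RootSystemData V) {α : V} (hα : α ∈ R.simples) :
    (simplesBasis R).sumCoords α = 1 := by
  have h : α = (simplesBasis R) ⟨α, hα⟩ := by rw [simplesBasis, Module.Basis.mk_apply]
  rw [h, Module.Basis.sumCoords_self_apply]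

lemma f_pos (R : RootSystemData V) {β : V} (hβ : β ∈ R.pos) :
    1 ≤ (simplesBasis R).sumCoords β := by
  obtain ⟨c, hsupp, hsum⟩ := R.pos_sum_of_simples β hβ
  have hc : c ≠ 0 := by
    rintro rfl
    exact aux_pos_ne_zero R hβ (by simpa using hsum)
  obtain ⟨α₀, hα₀⟩ := Finsupp.ne_iff.mp hc
  have hα₀' : c α₀ ≠ 0 := by simpa using hα₀
  have hα₀s : α₀ ∈ c.support := Finsupp.mem_support_iff.mpr hα₀'
  have hval : (simplesBasis R).sumCoords β = ∑ α ∈ c.support, (c α : ℝ) := by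
    rw [hsum, map_finsuppSum, Finsupp.sum]
    refine Finset.sum_congr rfl fun α hα => ?_
    rw [map_smul, smul_eq_mul, f_simple R (hsupp hα), mul_one]
  rw [hval]
  calc (1 : ℝ) ≤ (c α₀ : ℝ) := by exact_mod_cast Nat.one_le_iff_ne_zero.mpr hα₀'
    _ ≤ ∑ α ∈ c.support, (c α : ℝ) :=
        Finset.single_le_sum (f := fun α => (c α : ℝ)) (fun α _ => by positivity) hα₀s

lemma no_gt_simple (R : RootSystemData V) {α β : V} (hα : α ∈ R.simples)
    (hβ : β ∈ R.pos) : ¬ R.Gt α β := by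
  rintro ⟨m, hm0, hmpos, hsum⟩
  set f := (simplesBasis R).sumCoords with hf
  have h1 : f α - f β = f m.sum := by rw [← map_sub, hsum]
  have h2 : (Multiset.card m : ℝ) ≤ f m.sum := by
    rw [hf, map_multiset_sum]
    have hall : ∀ x ∈ m.map (simplesBasis R).sumCoords, (1 : ℝ) ≤ x := by
      intro x hx
      obtain ⟨z, hz, rfl⟩ := Multiset.mem_map.mp hx
      exact f_pos R (hmpos z hz)
    calc (Multiset.card m : ℝ) = (Multiset.card (m.map (simplesBasis R).sumCoords)) • (1 : ℝ) := by
          simp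
      _ ≤ (m.map (simplesBasis R).sumCoords).sum := Multiset.card_nsmul_le_sum hall
  have h3 : (1 : ℝ) ≤ (Multiset.card m : ℝ) := by
    exact_mod_cast Nat.succ_le_of_lt (Multiset.card_pos.mpr hm0)
  have h4 : f α = 1 := f_simple R hα
  have h5 : 1 ≤ f β := f_pos R hβ
  linarith

lemma dichotomy (R : RootSystemData V) {F : Set V} (hF : R.IsRegion F) {β : V}
    (hβ : β ∈ R.pos) :
    (∀ χ ∈ F, ⟪β, χ⟫ < 1) ∨ (∀ χ ∈ F, 1 < ⟪β, χ⟫) := by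
  obtain ⟨χ₁, hχ₁, rfl⟩ := hF
  by_contra h
  push_neg at h
  obtain ⟨⟨χa, hχa, h1a⟩, ⟨χb, hχb, h1b⟩⟩ := h
  have hsub : connectedComponentIn R.chamberSet χ₁ ⊆ R.chamberSet :=
    connectedComponentIn_subset _ _
  have hcont : ContinuousOn (fun χ : V => ⟪β, χ⟫)
      (connectedComponentIn R.chamberSet χ₁) :=
    (Continuous.inner continuous_const continuous_id).continuousOn
  have h1 : (1 : ℝ) ∈ Set.Icc (⟪β, χb⟫) (⟪β, χa⟫) := ⟨h1b, h1a⟩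
  obtain ⟨χ, hχ, hχeq⟩ :=
    isPreconnected_connectedComponentIn.intermediate_value hχb hχa hcont h1
  exact (hsub hχ).2 β hβ hχeq

noncomputable def innerEquiv (R : RootSystemData V) [FiniteDimensional ℝ V] :
    V ≃ₗ[ℝ] ({x // x ∈ R.simples} → ℝ) :=
  LinearMap.linearEquivOfInjective
    (LinearMap.pi fun i : {x // x ∈ R.simples} => ((innerSL ℝ (i : V)).toLinearMap))
    (by
      rw [← LinearMap.ker_eq_bot, Submodule.eq_bot_iff]
      intro χ hχ
      have h : ∀ i : {x // x ∈ R.simples}, ⟪(i : V), χ⟫ = 0 := by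
        intro i
        have := congrFun (LinearMap.mem_ker.mp hχ) i
        simpa [LinearMap.pi_apply] using this
      have hker : Submodule.span ℝ (R.simples : Set V) ≤
          LinearMap.ker ((innerSL ℝ χ).toLinearMap) := by
        rw [Submodule.span_le]
        intro s hs
        simp only [SetLike.mem_coe, LinearMap.mem_ker, ContinuousLinearMap.coe_coe,
          innerSL_apply_apply]
        rw [real_inner_comm]
        exact h ⟨s, hs⟩
      have hmem : χ ∈ Submodule.span ℝ (R.simples : Set V) := by
        rw [aux_span R]; trivial
      have h0 : ⟪χ, χ⟫ = 0 := by simpa using hker hmem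
      exact inner_self_eq_zero.mp h0)
    (by rw [Module.finrank_fintype_fun_eq_card,
          Module.finrank_eq_card_basis (simplesBasis R)])

lemma innerEquiv_apply (R : RootSystemData V) [FiniteDimensional ℝ V] (χ : V)
    (i : {x // x ∈ R.simples}) : innerEquiv R χ i = ⟪(i : V), χ⟫ := by
  rw [innerEquiv, LinearMap.linearEquivOfInjective_apply, LinearMap.pi_apply]
  rfl

lemma inner_pos_eq (R : RootSystemData V) {β : V} (c : V →₀ ℕ)
    (hβ : β = c.sum fun α n => (n : ℝ) • α) (x : V) :
    ⟪β, x⟫ = ∑ α ∈ c.support, (c α : ℝ) * ⟪α, x⟫ := by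
  rw [hβ, Finsupp.sum, sum_inner]
  exact Finset.sum_congr rfl fun α _ => real_inner_smul_left α x (c α)

end Aux

/-- A region `F` is unbounded if and only if `δ'(F)` contains a simple root. -/
theorem statement3 {V : Type} [NormedAddCommGroup V] [InnerProductSpace ℝ V]
    [FiniteDimensional ℝ V] (R : RootSystemData V)
    (F : Set V) (hF : R.IsRegion F) :
    ¬ Bornology.IsBounded F ↔ ∃ α ∈ R.simples, α ∈ R.deltaHigh F := by
  classical
  obtain ⟨χ₀, hχ₀, hFeq⟩ := hF
  have hFregion : R.IsRegion F := ⟨χ₀, hχ₀, hFeq⟩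
  have hFsub : F ⊆ R.chamberSet := hFeq ▸ connectedComponentIn_subset _ _
  have hχ₀F : χ₀ ∈ F := hFeq ▸ mem_connectedComponentIn hχ₀
  constructor
  · -- unbounded → a simple root lies in δ'(F)
    intro hub
    by_contra hno
    push_neg at hno
    apply hub
    have hlt : ∀ α ∈ R.simples, ∀ χ ∈ F, ⟪α, χ⟫ < 1 := by
      intro α hα
      rcases dichotomy R hFregion (R.simples_subset hα) with h | h
      · exact h
      · exact absurd (⟨⟨R.simples_subset hα, h⟩,
          fun β' hβ' => no_gt_simple R hα hβ'.1⟩ : α ∈ R.deltaHigh F) (hno α hα)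
    set e := (innerEquiv R).toContinuousLinearEquiv with he
    rw [isBounded_iff_forall_norm_le]
    refine ⟨‖(e.symm : ({x // x ∈ R.simples} → ℝ) →L[ℝ] V)‖, fun χ hχ => ?_⟩
    have h1 : ‖e χ‖ ≤ 1 := by
      rw [pi_norm_le_iff_of_nonneg zero_le_one]
      intro i
      have h2 : e χ i = ⟪(i : V), χ⟫ := by
        rw [he, LinearEquiv.coe_toContinuousLinearEquiv', innerEquiv_apply]
      rw [h2, Real.norm_eq_abs, abs_le]
      exact ⟨by linarith [(hFsub hχ).1 i i.2], (hlt i i.2 χ hχ).le⟩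
    calc ‖χ‖ = ‖e.symm (e χ)‖ := by rw [e.symm_apply_apply]
      _ ≤ ‖(e.symm : ({x // x ∈ R.simples} → ℝ) →L[ℝ] V)‖ * ‖e χ‖ :=
          (e.symm : ({x // x ∈ R.simples} → ℝ) →L[ℝ] V).le_opNorm _
      _ ≤ _ := by
          have := norm_nonneg (e.symm : ({x // x ∈ R.simples} → ℝ) →L[ℝ] V)
          nlinarith
  · -- a simple root in δ'(F) → unbounded
    rintro ⟨α, hα, ⟨hαpos, hαgt⟩, -⟩ hbd
    set v := (innerEquiv R).symm (Pi.single ⟨α, hα⟩ 1) with hv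
    have hvinner : ∀ α', α' ∈ R.simples → ⟪α', v⟫ = if α' = α then 1 else 0 := by
      intro α' h'
      have h2 : innerEquiv R v = Pi.single ⟨α, hα⟩ 1 := by
        rw [hv, LinearEquiv.apply_symm_apply]
      have h3 := innerEquiv_apply R v ⟨α', h'⟩
      rw [h2, Pi.single_apply] at h3
      rw [← h3]
      congr 1
      simp [Subtype.ext_iff]
    have key : ∀ β ∈ R.pos, (⟪β, v⟫ = 0) ∨ (0 < ⟪β, v⟫ ∧ 1 < ⟪β, χ₀⟫) := by
      intro β hβ
      obtain ⟨c, hsupp, hsum⟩ := R.pos_sum_of_simples β hβ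
      have hbv : ⟪β, v⟫ = if α ∈ c.support then (c α : ℝ) else 0 := by
        have hterms : ∑ α' ∈ c.support, (c α' : ℝ) * ⟪α', v⟫ =
            ∑ α' ∈ c.support, if α' = α then (c α' : ℝ) else 0 :=
          Finset.sum_congr rfl fun α' hα' => by
            rw [hvinner α' (hsupp hα')]; split <;> simp
        rw [inner_pos_eq R c hsum v, hterms,
          Finset.sum_ite_eq' c.support α (fun α' => (c α' : ℝ))]
      by_cases hmem : α ∈ c.support
      · right
        have hcα : (1 : ℝ) ≤ (c α : ℝ) := by
          exact_mod_cast Nat.one_le_iff_ne_zero.mpr (Finsupp.mem_support_iff.mp hmem)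
        refine ⟨by rw [hbv, if_pos hmem]; linarith, ?_⟩
        have h1 : (c α : ℝ) * ⟪α, χ₀⟫ ≤ ⟪β, χ₀⟫ := by
          rw [inner_pos_eq R c hsum χ₀]
          exact Finset.single_le_sum (f := fun α' => (c α' : ℝ) * ⟪α', χ₀⟫)
            (fun α' hα' => mul_nonneg (Nat.cast_nonneg _) ((hχ₀.1 α' (hsupp hα')).le)) hmem
        have h2 : 1 < ⟪α, χ₀⟫ := hαgt χ₀ hχ₀F
        nlinarith
      · left; rw [hbv, if_neg hmem]
    have hray : ∀ t : ℝ, 0 ≤ t → χ₀ + t • v ∈ R.chamberSet := by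
      intro t ht
      constructor
      · intro α' h'
        rw [inner_add_right, real_inner_smul_right, hvinner α' h']
        have := hχ₀.1 α' h'
        split <;> nlinarith
      · intro β hβ
        rw [inner_add_right, real_inner_smul_right]
        rcases key β hβ with h | ⟨h1, h2⟩
        · rw [h, mul_zero, add_zero]; exact hχ₀.2 β hβ
        · exact ne_of_gt (by nlinarith)
    have hraysub : (fun t : ℝ => χ₀ + t • v) '' Set.Ici 0 ⊆ F := by
      rw [hFeq]
      refine IsPreconnected.subset_connectedComponentIn ?_ ?_ ?_
      · exact isPreconnected_Ici.image _ (Continuous.continuousOn (by continuity))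
      · exact ⟨0, Set.self_mem_Ici, by simp⟩
      · rintro x ⟨t, ht, rfl⟩; exact hray t ht
    have hv1 : ⟪α, v⟫ = 1 := by rw [hvinner α hα]; simp
    have hvne : v ≠ 0 := by
      intro h; rw [h, inner_zero_right] at hv1; norm_num at hv1
    have hvpos : 0 < ‖v‖ := norm_pos_iff.mpr hvne
    obtain ⟨C, hC⟩ := isBounded_iff_forall_norm_le.mp hbd
    have hC0 : ‖χ₀‖ ≤ C := hC χ₀ hχ₀F
    set t := (C + ‖χ₀‖ + 1) / ‖v‖ with htdef
    have ht0 : 0 ≤ t := div_nonneg (by linarith [norm_nonneg χ₀]) hvpos.le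
    have hmem : χ₀ + t • v ∈ F := hraysub ⟨t, ht0, rfl⟩
    have hle : ‖χ₀ + t • v‖ ≤ C := hC _ hmem
    have htv : t * ‖v‖ = C + ‖χ₀‖ + 1 := div_mul_cancel₀ _ (ne_of_gt hvpos)
    have htri : ‖t • v‖ ≤ ‖χ₀ + t • v‖ + ‖χ₀‖ := by
      have := norm_sub_le (χ₀ + t • v) χ₀
      simpa using this
    have hsmul : ‖t • v‖ = t * ‖v‖ := by
      rw [norm_smul, Real.norm_eq_abs, abs_of_nonneg ht0]
    linarith
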